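/- Let X be an n×k real matrix of rank k (k < n) and let g : R^n → R satisfy g(δy + Xη) = δ²g(y) for every y ∈ R^n, every δ ≠ 0, and every η ∈ R^k, and assume g is Borel measurable. Then for every μ ∈ span(X) and every σ ∈ (0, ∞), the Gaussian probability P_{μ, σ²I_n}(g ≥ 0) equals P_{0, I_n}(g ≥ 0), where P_{μ, Σ} denotes the N(μ, Σ) distribution on R^n. -/

import Mathlib

open Matrix MeasureTheory

/-- The Gaussian measure `N(μ, S)` on `ℝⁿ`, defined through its Lebesgue density. -/
noncomputable def gaussianMeasure {n : ℕ} (μ : Fin n → ℝ) (S : Matrix (Fin n) (Fin n) ℝ) :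
    Measure (Fin n → ℝ) :=
  volume.withDensity fun y =>
    ENNReal.ofReal (Real.sqrt (((2 * Real.pi) ^ n * S.det)⁻¹) *
      Real.exp (-(1 / 2) * ((y - μ) ⬝ᵥ S⁻¹.mulVec (y - μ))))

theorem stmt_9 {n k : ℕ} (hkn : k < n)
    (X : Matrix (Fin n) (Fin k) ℝ) (hX : X.rank = k)
    (g : (Fin n → ℝ) → ℝ) (hmeas : Measurable g)
    (hg : ∀ (y : Fin n → ℝ) (δ : ℝ), δ ≠ 0 → ∀ η : Fin k → ℝ,
      g (δ • y + X.mulVec η) = δ ^ 2 * g y) :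
    ∀ (η : Fin k → ℝ) (σ : ℝ), 0 < σ →
      gaussianMeasure (X.mulVec η) (σ ^ 2 • (1 : Matrix (Fin n) (Fin n) ℝ))
          {y | 0 ≤ g y} =
        gaussianMeasure 0 (1 : Matrix (Fin n) (Fin n) ℝ) {y | 0 ≤ g y} := by
  intro η σ hσ
  have hA : MeasurableSet {y : Fin n → ℝ | 0 ≤ g y} :=
    measurableSet_le measurable_const hmeas
  set A := {y : Fin n → ℝ | 0 ≤ g y} with hAdef
  set μv := X.mulVec η with hμv
  set T : (Fin n → ℝ) → (Fin n → ℝ) := fun z => σ • z + μv with hT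
  have hTmeas : Measurable T := by fun_prop
  -- preimage invariance
  have hpre : T ⁻¹' A = A := by
    ext z
    simp only [hAdef, hT, Set.mem_preimage, Set.mem_setOf_eq, hg z σ hσ.ne' η]
    rw [hμv, hg z σ hσ.ne' η]
    exact mul_nonneg_iff_of_pos_left (pow_pos hσ 2)
  -- matrix simplifications
  have hdet : ((σ ^ 2 • (1 : Matrix (Fin n) (Fin n) ℝ))).det = σ ^ (2 * n) := by
    rw [Matrix.det_smul, Matrix.det_one, mul_one, Fintype.card_fin, ← pow_mul]
  have hinv : ((σ ^ 2 • (1 : Matrix (Fin n) (Fin n) ℝ)))⁻¹ = (σ ^ 2)⁻¹ • 1 := by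
    apply Matrix.inv_eq_right_inv
    rw [Matrix.smul_mul, Matrix.mul_smul, one_mul, smul_smul,
      mul_inv_cancel₀ (by positivity), one_smul]
  -- the two densities
  set G : (Fin n → ℝ) → ENNReal := fun z =>
    ENNReal.ofReal (Real.sqrt (((2 * Real.pi) ^ n)⁻¹) * Real.exp (-(1 / 2) * (z ⬝ᵥ z)))
    with hG
  set F : (Fin n → ℝ) → ENNReal := fun y =>
    ENNReal.ofReal (Real.sqrt (((2 * Real.pi) ^ n * σ ^ (2 * n))⁻¹) *
      Real.exp (-(1 / 2) * ((σ ^ 2)⁻¹ * ((y - μv) ⬝ᵥ (y - μv))))) with hF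
  have hFmeas : Measurable F := by
    apply Measurable.ennreal_ofReal
    apply Measurable.const_mul
    apply Real.measurable_exp.comp
    apply Measurable.const_mul
    apply Measurable.const_mul
    unfold dotProduct
    exact Finset.measurable_sum _ fun i _ => by fun_prop
  -- F ∘ T = (σ^n)⁻¹ • G
  have hFT : ∀ z, F (T z) = ENNReal.ofReal ((σ ^ n)⁻¹) * G z := by
    intro z
    have h1 : T z - μv = σ • z := by simp [hT]
    have h2 : (σ • z) ⬝ᵥ (σ • z) = σ ^ 2 * (z ⬝ᵥ z) := by
      rw [smul_dotProduct, dotProduct_smul, smul_eq_mul, smul_eq_mul]; ring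
    have h3 : (σ ^ 2)⁻¹ * ((σ ^ 2) * (z ⬝ᵥ z)) = z ⬝ᵥ z := by
      rw [← mul_assoc, inv_mul_cancel₀ (by positivity), one_mul]
    have hC : Real.sqrt (((2 * Real.pi) ^ n * σ ^ (2 * n))⁻¹) =
        (σ ^ n)⁻¹ * Real.sqrt (((2 * Real.pi) ^ n)⁻¹) := by
      rw [mul_inv, Real.sqrt_mul (by positivity), Real.sqrt_inv (σ ^ (2 * n)),
        mul_comm 2 n, pow_mul, Real.sqrt_sq (by positivity), mul_comm]
    rw [hF, hG]
    simp only [h1, h2, h3, hC]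
    rw [mul_assoc, ENNReal.ofReal_mul (by positivity)]
  -- change of variables
  have hmap : Measure.map T (volume : Measure (Fin n → ℝ)) =
      ENNReal.ofReal ((σ ^ n)⁻¹) • volume := by
    have hcomp : T = (fun y => y + μv) ∘ (fun z => σ • z) := rfl
    rw [hcomp, ← Measure.map_map (measurable_add_const μv) (measurable_const_smul σ),
      Measure.map_addHaar_smul volume hσ.ne', Measure.map_smul,
      (measurePreserving_add_right volume μv).map_eq]
    congr 1
    rw [Module.finrank_fintype_fun_eq_card, Fintype.card_fin, abs_of_nonneg (by positivity)]
  have hvol : (volume : Measure (Fin n → ℝ)) =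
      ENNReal.ofReal (σ ^ n) • Measure.map T volume := by
    rw [hmap, smul_smul, ← ENNReal.ofReal_mul (by positivity),
      mul_inv_cancel₀ (by positivity), ENNReal.ofReal_one, one_smul]
  have key : ∫⁻ y in A, F y ∂volume = ∫⁻ z in A, G z ∂volume := by
    conv_lhs => rw [hvol]
    rw [Measure.restrict_smul, lintegral_smul_measure, setLIntegral_map hA hFmeas hTmeas,
      hpre]
    calc ENNReal.ofReal (σ ^ n) * ∫⁻ z in A, F (T z) ∂volume
        = ENNReal.ofReal (σ ^ n) * ∫⁻ z in A, ENNReal.ofReal ((σ ^ n)⁻¹) * G z ∂volume := by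
          congr 1; exact lintegral_congr fun z => hFT z
      _ = ENNReal.ofReal (σ ^ n) * (ENNReal.ofReal ((σ ^ n)⁻¹) * ∫⁻ z in A, G z ∂volume) := by
          rw [lintegral_const_mul' _ _ ENNReal.ofReal_ne_top]
      _ = ∫⁻ z in A, G z ∂volume := by
          rw [← mul_assoc, ← ENNReal.ofReal_mul (by positivity),
            mul_inv_cancel₀ (by positivity), ENNReal.ofReal_one, one_mul]
  -- finish: identify the gaussian measures with F and G
  unfold gaussianMeasure
  rw [withDensity_apply _ hA, withDensity_apply _ hA]
  have hL : ∀ y : Fin n → ℝ,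
      ENNReal.ofReal (Real.sqrt (((2 * Real.pi) ^ n *
          (σ ^ 2 • (1 : Matrix (Fin n) (Fin n) ℝ)).det)⁻¹) *
        Real.exp (-(1 / 2) * ((y - μv) ⬝ᵥ
          ((σ ^ 2 • (1 : Matrix (Fin n) (Fin n) ℝ)))⁻¹.mulVec (y - μv)))) = F y := by
    intro y
    rw [hdet, hinv, Matrix.smul_mulVec, Matrix.one_mulVec, dotProduct_smul,
      smul_eq_mul]
  have hR : ∀ y : Fin n → ℝ,
      ENNReal.ofReal (Real.sqrt (((2 * Real.pi) ^ n *
          (1 : Matrix (Fin n) (Fin n) ℝ).det)⁻¹) *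
        Real.exp (-(1 / 2) * ((y - 0) ⬝ᵥ
          ((1 : Matrix (Fin n) (Fin n) ℝ))⁻¹.mulVec (y - 0)))) = G y := by
    intro y
    rw [Matrix.det_one, mul_one, inv_one, Matrix.one_mulVec, sub_zero]
  calc ∫⁻ y in A, _ ∂volume = ∫⁻ y in A, F y ∂volume := lintegral_congr hL
    _ = ∫⁻ z in A, G z ∂volume := key
    _ = _ := (lintegral_congr hR).symm
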